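/- Let f : ℝⁿ → ℝ be continuously differentiable with L_g-Lipschitz gradient. Let x', x ∈ ℝⁿ, Δ', Δ > 0, and let ĉ' = (c₀, Δ' g', Δ'² vech(H')) ∈ ℝ^q with g' ∈ ℝⁿ and H' symmetric, such that ‖ĉ' − ĉ'^ℓ‖₂ ≤ κ_e Δ'² where ĉ'^ℓ := (f(x'), Δ' ∇f(x'), 0) and the constant blocks agree (c₀ = f(x')). Suppose ‖x − x'‖₂ ≤ C_s Δ and Δ' ≤ C_Δ Δ for constants C_s, C_Δ ≥ 0. Define the transported prior ĉ^π := (f(x), Δ (g' + H'(x − x')), Δ² vech(H')) and ĉ^ℓ := (f(x), Δ ∇f(x), 0). Then for every symmetric positive definite W with W ⪯ w_max I, ‖ĉ^π − ĉ^ℓ‖_W ≤ √w_max · (C_T κ_e + C_s L_g) · Δ², where C_T := C_Δ + √2 C_s + 1. -/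

import Mathlib

open Matrix

/-- Index type for the entries of `vech` of a symmetric `n × n` matrix: pairs `i ≤ j`. -/
abbrev VIdx (n : ℕ) := {p : Fin n × Fin n // p.1 ≤ p.2}

/-- Index type for quadratic coefficient vectors (constant, gradient, Hessian blocks);
its cardinality is `q = (n+1)(n+2)/2`. -/
abbrev QIdx (n : ℕ) := Unit ⊕ Fin n ⊕ VIdx n

/-- Assemble a coefficient vector in `ℝ^q` from its constant, gradient and Hessian blocks. -/
noncomputable def blockVec {n : ℕ} (c0 : ℝ) (cg : Fin n → ℝ) (cH : VIdx n → ℝ) :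
    QIdx n → ℝ :=
  Sum.elim (fun _ => c0) (Sum.elim cg cH)

/-- The half-vectorization of a symmetric matrix. -/
noncomputable def vech {n : ℕ} (H : Matrix (Fin n) (Fin n) ℝ) : VIdx n → ℝ :=
  fun p => H p.val.1 p.val.2

/-- The `W`-weighted norm `‖v‖_W = √(vᵀ W v)`. -/
noncomputable def wNorm {ι : Type*} [Fintype ι] (W : Matrix ι ι ℝ) (v : ι → ℝ) : ℝ :=
  Real.sqrt (v ⬝ᵥ (W *ᵥ v))

/-- The Euclidean norm `‖v‖₂ = √(vᵀ v)` of a vector. -/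
noncomputable def eNorm {ι : Type*} [Fintype ι] (v : ι → ℝ) : ℝ :=
  Real.sqrt (v ⬝ᵥ v)

section Helpers
variable {ι : Type*} [Fintype ι]

lemma dot_self_nonneg' (v : ι → ℝ) : 0 ≤ v ⬝ᵥ v :=
  Finset.sum_nonneg fun _ _ => mul_self_nonneg _

lemma eNorm_nonneg' (v : ι → ℝ) : 0 ≤ eNorm v := Real.sqrt_nonneg _

lemma sq_eNorm (v : ι → ℝ) : eNorm v ^ 2 = v ⬝ᵥ v := Real.sq_sqrt (dot_self_nonneg' v)

lemma eNorm_eq_norm (v : ι → ℝ) :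
    eNorm v = ‖(WithLp.equiv 2 (ι → ℝ)).symm v‖ := by
  rw [EuclideanSpace.norm_eq, eNorm, dotProduct]
  congr 1
  exact Finset.sum_congr rfl fun i _ => by
    rw [WithLp.equiv_symm_apply, WithLp.ofLp_toLp, Real.norm_eq_abs, sq_abs, sq]

lemma eNorm_add_le (u v : ι → ℝ) : eNorm (u + v) ≤ eNorm u + eNorm v := by
  simp only [eNorm_eq_norm]
  rw [WithLp.equiv_symm_apply, WithLp.toLp_add]
  exact norm_add_le _ _

lemma eNorm_smul' (c : ℝ) (v : ι → ℝ) : eNorm (c • v) = |c| * eNorm v := by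
  simp only [eNorm_eq_norm]
  rw [WithLp.equiv_symm_apply, WithLp.toLp_smul, norm_smul, Real.norm_eq_abs]

lemma eNorm_le_of_dot_le {v : ι → ℝ} {a : ℝ} (ha : 0 ≤ a) (h : v ⬝ᵥ v ≤ a ^ 2) :
    eNorm v ≤ a := by
  rw [eNorm]
  calc Real.sqrt (v ⬝ᵥ v) ≤ Real.sqrt (a ^ 2) := Real.sqrt_le_sqrt h
    _ = a := Real.sqrt_sq ha

end Helpers

lemma eNorm_coe {n : ℕ} (y : EuclideanSpace ℝ (Fin n)) :
    eNorm (fun i => y i) = ‖y‖ := by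
  rw [EuclideanSpace.norm_eq, eNorm, dotProduct]
  congr 1
  exact Finset.sum_congr rfl fun i _ => by
    rw [Real.norm_eq_abs, sq_abs, sq]

lemma frob_le_two_vech {m : ℕ} (H : Matrix (Fin m) (Fin m) ℝ) (hH : H.IsSymm) :
    (∑ p : Fin m × Fin m, H p.1 p.2 ^ 2) ≤ 2 * ∑ p : VIdx m, vech H p ^ 2 := by
  have hsym : ∀ i j, H i j = H j i := fun i j => (Matrix.IsSymm.apply hH j i)
  have hv : (∑ p : VIdx m, vech H p ^ 2)
      = ∑ p ∈ Finset.univ.filter (fun p : Fin m × Fin m => p.1 ≤ p.2), H p.1 p.2 ^ 2 := by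
    simp only [vech]
    exact (Finset.sum_subtype _ (fun x => by simp) (fun p : Fin m × Fin m => H p.1 p.2 ^ 2)).symm
  have hsplit := Finset.sum_filter_add_sum_filter_not
    (Finset.univ : Finset (Fin m × Fin m)) (fun p => p.1 ≤ p.2) (fun p => H p.1 p.2 ^ 2)
  have hneg : (∑ p ∈ Finset.univ.filter (fun p : Fin m × Fin m => ¬ p.1 ≤ p.2), H p.1 p.2 ^ 2)
      = ∑ p ∈ Finset.univ.filter (fun p : Fin m × Fin m => p.1 < p.2), H p.1 p.2 ^ 2 := by
    refine Finset.sum_equiv (Equiv.prodComm (Fin m) (Fin m)) ?_ ?_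
    · intro p
      simp only [Finset.mem_filter, Finset.mem_univ, true_and, Equiv.prodComm_apply]
      constructor
      · intro h; exact lt_of_not_ge h
      · intro h; exact not_le_of_gt h
    · intro p _
      simp only [Equiv.prodComm_apply]
      rw [hsym p.1 p.2]; rfl
  have hle : (∑ p ∈ Finset.univ.filter (fun p : Fin m × Fin m => p.1 < p.2), H p.1 p.2 ^ 2)
      ≤ ∑ p ∈ Finset.univ.filter (fun p : Fin m × Fin m => p.1 ≤ p.2), H p.1 p.2 ^ 2 := by
    apply Finset.sum_le_sum_of_subset_of_nonneg
    · intro p hp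
      simp only [Finset.mem_filter, Finset.mem_univ, true_and] at hp ⊢
      exact hp.le
    · intro p _ _; positivity
  rw [hv]
  calc (∑ p : Fin m × Fin m, H p.1 p.2 ^ 2)
      = (∑ p ∈ Finset.univ.filter (fun p : Fin m × Fin m => p.1 ≤ p.2), H p.1 p.2 ^ 2)
        + ∑ p ∈ Finset.univ.filter (fun p : Fin m × Fin m => ¬ p.1 ≤ p.2), H p.1 p.2 ^ 2 :=
        hsplit.symm
    _ ≤ _ := by rw [hneg]; linarith

lemma eNorm_mulVec_le {m : ℕ} (H : Matrix (Fin m) (Fin m) ℝ) (hH : H.IsSymm) (v : Fin m → ℝ) :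
    eNorm (H *ᵥ v) ≤ Real.sqrt 2 * eNorm (vech H) * eNorm v := by
  have h1 : (H *ᵥ v) ⬝ᵥ (H *ᵥ v) ≤ (2 * ∑ p : VIdx m, vech H p ^ 2) * (v ⬝ᵥ v) := by
    have hcs : ∀ i : Fin m, (H *ᵥ v) i * (H *ᵥ v) i ≤ (∑ j, H i j ^ 2) * (∑ j, v j ^ 2) := by
      intro i
      have := Finset.sum_mul_sq_le_sq_mul_sq Finset.univ (fun j => H i j) v
      calc (H *ᵥ v) i * (H *ᵥ v) i = (∑ j, H i j * v j) ^ 2 := by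
            simp [Matrix.mulVec, dotProduct, sq]
        _ ≤ _ := this
    calc (H *ᵥ v) ⬝ᵥ (H *ᵥ v) ≤ ∑ i, (∑ j, H i j ^ 2) * (∑ j, v j ^ 2) :=
          Finset.sum_le_sum fun i _ => hcs i
      _ = (∑ p : Fin m × Fin m, H p.1 p.2 ^ 2) * (v ⬝ᵥ v) := by
          rw [Fintype.sum_prod_type, Finset.sum_mul]
          refine Finset.sum_congr rfl fun i _ => by
            congr 1
            simp [dotProduct, sq]
      _ ≤ (2 * ∑ p : VIdx m, vech H p ^ 2) * (v ⬝ᵥ v) := by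
          apply mul_le_mul_of_nonneg_right (frob_le_two_vech H hH) (dot_self_nonneg' v)
  apply eNorm_le_of_dot_le
    (mul_nonneg (mul_nonneg (Real.sqrt_nonneg 2) (eNorm_nonneg' _)) (eNorm_nonneg' _))
  calc (H *ᵥ v) ⬝ᵥ (H *ᵥ v) ≤ (2 * ∑ p : VIdx m, vech H p ^ 2) * (v ⬝ᵥ v) := h1
    _ = (Real.sqrt 2 * eNorm (vech H) * eNorm v) ^ 2 := by
        have h2 : (Real.sqrt 2) ^ 2 = 2 := Real.sq_sqrt (by norm_num)
        have h3 : eNorm (vech H) ^ 2 = ∑ p : VIdx m, vech H p ^ 2 := by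
          rw [sq_eNorm, dotProduct]; exact Finset.sum_congr rfl fun p _ => (sq _).symm
        have h4 := sq_eNorm v
        rw [mul_pow, mul_pow, h2, h3, h4]

lemma blockVec_dot {n : ℕ} (a : ℝ) (b : Fin n → ℝ) (c : VIdx n → ℝ) :
    (blockVec a b c) ⬝ᵥ (blockVec a b c) = a * a + b ⬝ᵥ b + c ⬝ᵥ c := by
  simp [blockVec, dotProduct, Fintype.sum_sum_type, add_assoc]

lemma blockVec_sub {n : ℕ} (a a' : ℝ) (b b' : Fin n → ℝ) (c c' : VIdx n → ℝ) :
    blockVec a b c - blockVec a' b' c' = blockVec (a - a') (b - b') (c - c') := by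
  funext p
  rcases p with _ | q
  · rfl
  · rcases q with i | r <;> rfl

lemma eNorm_blockVec_zero_le {n : ℕ} (b : Fin n → ℝ) (c : VIdx n → ℝ) :
    eNorm (blockVec 0 b c) ≤ eNorm b + eNorm c := by
  apply eNorm_le_of_dot_le (add_nonneg (eNorm_nonneg' b) (eNorm_nonneg' c))
  rw [blockVec_dot]
  nlinarith [sq_eNorm b, sq_eNorm c, eNorm_nonneg' b, eNorm_nonneg' c,
    mul_nonneg (eNorm_nonneg' b) (eNorm_nonneg' c)]

set_option maxHeartbeats 1000000 in
theorem stmt8 (n : ℕ)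
    (f : EuclideanSpace ℝ (Fin n) → ℝ) (hf : ContDiff ℝ 1 f)
    (Lg : ℝ) (hLg : 0 < Lg)
    (hlip : ∀ a c : EuclideanSpace ℝ (Fin n),
      ‖gradient f a - gradient f c‖ ≤ Lg * ‖a - c‖)
    (x' x : EuclideanSpace ℝ (Fin n)) (Δ' Δ : ℝ) (hΔ' : 0 < Δ') (hΔ : 0 < Δ)
    (c0 : ℝ) (g' : Fin n → ℝ) (H' : Matrix (Fin n) (Fin n) ℝ) (hH' : H'.IsSymm)
    (chat' chatl' : QIdx n → ℝ)
    (hchat' : chat' = blockVec c0 (fun i => Δ' * g' i) (fun p => Δ' ^ 2 * vech H' p))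
    (hchatl' : chatl' = blockVec (f x') (fun i => Δ' * gradient f x' i) 0)
    (hc0 : c0 = f x')
    (κe : ℝ) (herr : eNorm (chat' - chatl') ≤ κe * Δ' ^ 2)
    (Cs CΔ : ℝ) (hCs : 0 ≤ Cs) (hCΔ : 0 ≤ CΔ)
    (hxx : ‖x - x'‖ ≤ Cs * Δ) (hΔΔ : Δ' ≤ CΔ * Δ)
    (cpi cl : QIdx n → ℝ)
    (hcpi : cpi = blockVec (f x)
      (fun i => Δ * (g' i + (H' *ᵥ fun j => (x - x') j) i))
      (fun p => Δ ^ 2 * vech H' p))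
    (hcl : cl = blockVec (f x) (fun i => Δ * gradient f x i) 0)
    (CT : ℝ) (hCT : CT = CΔ + Real.sqrt 2 * Cs + 1)
    (wmax : ℝ) :
    ∀ W : Matrix (QIdx n) (QIdx n) ℝ, W.PosDef →
      (wmax • (1 : Matrix (QIdx n) (QIdx n) ℝ) - W).PosSemidef →
      wNorm W (cpi - cl) ≤ Real.sqrt wmax * (CT * κe + Cs * Lg) * Δ ^ 2 := by
  intro W hW hWle
  -- basic nonnegativity
  have hκe : 0 ≤ κe := by
    have h0 : (0:ℝ) ≤ κe * Δ' ^ 2 := le_trans (eNorm_nonneg' _) herr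
    have h2 : (0:ℝ) < Δ' ^ 2 := by positivity
    nlinarith [h0, h2]
  -- decompose the error of the prior model
  set dgp : Fin n → ℝ := fun i => g' i - gradient f x' i with hdgp
  have hdiff' : chat' - chatl' = blockVec 0 (Δ' • dgp) ((Δ' ^ 2) • vech H') := by
    have hb : ((fun i => Δ' * g' i) - fun i => Δ' * gradient f x' i) = Δ' • dgp := by
      funext i; simp [hdgp, mul_sub]
    have hcb : ((fun p => Δ' ^ 2 * vech H' p) - (0 : VIdx n → ℝ)) = (Δ' ^ 2) • vech H' := by
      funext p; simp
    rw [hchat', hchatl', blockVec_sub, hc0, sub_self, hb, hcb]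
  have hdot' : (chat' - chatl') ⬝ᵥ (chat' - chatl') ≤ (κe * Δ' ^ 2) ^ 2 := by
    rw [← sq_eNorm]
    exact pow_le_pow_left₀ (eNorm_nonneg' _) herr 2
  have hblock := blockVec_dot 0 (Δ' • dgp) ((Δ' ^ 2) • vech H')
  rw [hdiff'] at hdot'
  rw [hblock] at hdot'
  have hbb : (Δ' • dgp) ⬝ᵥ (Δ' • dgp) ≤ (κe * Δ' ^ 2) ^ 2 := by
    nlinarith [dot_self_nonneg' ((Δ' ^ 2) • vech H')]
  have hcc : ((Δ' ^ 2) • vech H') ⬝ᵥ ((Δ' ^ 2) • vech H') ≤ (κe * Δ' ^ 2) ^ 2 := by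
    nlinarith [dot_self_nonneg' (Δ' • dgp)]
  have hdgp_le : eNorm dgp ≤ κe * Δ' := by
    have h1 : eNorm (Δ' • dgp) ≤ κe * Δ' ^ 2 := eNorm_le_of_dot_le (by positivity) hbb
    rw [eNorm_smul', abs_of_pos hΔ'] at h1
    have := mul_le_mul_of_nonneg_left h1 (le_of_lt (inv_pos.mpr hΔ'))
    calc eNorm dgp = Δ'⁻¹ * (Δ' * eNorm dgp) := by field_simp
      _ ≤ Δ'⁻¹ * (κe * Δ' ^ 2) := mul_le_mul_of_nonneg_left h1 (le_of_lt (inv_pos.mpr hΔ'))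
      _ = κe * Δ' := by field_simp
  have hvech_le : eNorm (vech H') ≤ κe := by
    have h1 : eNorm ((Δ' ^ 2) • vech H') ≤ κe * Δ' ^ 2 := eNorm_le_of_dot_le (by positivity) hcc
    rw [eNorm_smul', abs_of_pos (by positivity)] at h1
    have hpos : (0:ℝ) < Δ' ^ 2 := by positivity
    nlinarith
  -- the target difference vector
  set w : Fin n → ℝ := fun j => (x - x') j with hw
  have hwnorm : eNorm w = ‖x - x'‖ := eNorm_coe (x - x')
  set dgrad : Fin n → ℝ := fun i => gradient f x' i - gradient f x i with hdgrad
  have hdgradnorm : eNorm dgrad = ‖gradient f x' - gradient f x‖ := by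
    have : dgrad = fun i => (gradient f x' - gradient f x) i := rfl
    rw [this]; exact eNorm_coe _
  have hdiff : cpi - cl = blockVec 0 (Δ • (dgp + H' *ᵥ w + dgrad)) ((Δ ^ 2) • vech H') := by
    have hb : ((fun i => Δ * (g' i + (H' *ᵥ w) i)) - fun i => Δ * gradient f x i)
        = Δ • (dgp + H' *ᵥ w + dgrad) := by
      funext i
      simp only [Pi.sub_apply, Pi.smul_apply, Pi.add_apply, smul_eq_mul, hdgp, hdgrad]
      ring
    have hcb : ((fun p => Δ ^ 2 * vech H' p) - (0 : VIdx n → ℝ)) = (Δ ^ 2) • vech H' := by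
      funext p; simp
    rw [hcpi, hcl, blockVec_sub, sub_self, hb, hcb]
  -- bound the gradient block
  have hgrow : eNorm (dgp + H' *ᵥ w + dgrad)
      ≤ κe * Δ' + Real.sqrt 2 * κe * (Cs * Δ) + Lg * (Cs * Δ) := by
    have t1 := eNorm_add_le (dgp + H' *ᵥ w) dgrad
    have t2 := eNorm_add_le dgp (H' *ᵥ w)
    have t3 : eNorm (H' *ᵥ w) ≤ Real.sqrt 2 * κe * (Cs * Δ) := by
      calc eNorm (H' *ᵥ w) ≤ Real.sqrt 2 * eNorm (vech H') * eNorm w :=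
            eNorm_mulVec_le H' hH' w
        _ ≤ Real.sqrt 2 * κe * (Cs * Δ) := by
            have hs2 : (0:ℝ) ≤ Real.sqrt 2 := Real.sqrt_nonneg 2
            have hwle : eNorm w ≤ Cs * Δ := by rw [hwnorm]; exact hxx
            exact mul_le_mul (mul_le_mul_of_nonneg_left hvech_le hs2) hwle
              (eNorm_nonneg' w) (mul_nonneg hs2 hκe)
    have t4 : eNorm dgrad ≤ Lg * (Cs * Δ) := by
      rw [hdgradnorm]
      calc ‖gradient f x' - gradient f x‖ ≤ Lg * ‖x' - x‖ := hlip x' x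
        _ = Lg * ‖x - x'‖ := by rw [norm_sub_rev]
        _ ≤ Lg * (Cs * Δ) := mul_le_mul_of_nonneg_left hxx (le_of_lt hLg)
    linarith
  have hgblock : eNorm (Δ • (dgp + H' *ᵥ w + dgrad))
      ≤ Δ * (κe * Δ' + Real.sqrt 2 * κe * (Cs * Δ) + Lg * (Cs * Δ)) := by
    rw [eNorm_smul', abs_of_pos hΔ]
    exact mul_le_mul_of_nonneg_left hgrow (le_of_lt hΔ)
  have hHblock : eNorm ((Δ ^ 2) • vech H') ≤ Δ ^ 2 * κe := by
    rw [eNorm_smul', abs_of_pos (by positivity)]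
    exact mul_le_mul_of_nonneg_left hvech_le (by positivity)
  -- total Euclidean bound
  have htot : eNorm (cpi - cl) ≤ (CT * κe + Cs * Lg) * Δ ^ 2 := by
    rw [hdiff]
    calc eNorm (blockVec 0 (Δ • (dgp + H' *ᵥ w + dgrad)) ((Δ ^ 2) • vech H'))
        ≤ eNorm (Δ • (dgp + H' *ᵥ w + dgrad)) + eNorm ((Δ ^ 2) • vech H') :=
          eNorm_blockVec_zero_le _ _
      _ ≤ Δ * (κe * Δ' + Real.sqrt 2 * κe * (Cs * Δ) + Lg * (Cs * Δ)) + Δ ^ 2 * κe :=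
          add_le_add hgblock hHblock
      _ ≤ (CT * κe + Cs * Lg) * Δ ^ 2 := by
          rw [hCT]
          have h1 : Δ * (κe * Δ') ≤ Δ * (κe * (CΔ * Δ)) := by
            nlinarith [mul_nonneg (mul_nonneg hΔ.le hκe) (sub_nonneg.2 hΔΔ)]
          nlinarith [Real.sqrt_nonneg 2]
  -- pass to the weighted norm
  have hwmax : 0 ≤ wmax := by
    have hvne : (fun _ => (1:ℝ) : QIdx n → ℝ) ≠ 0 := by
      intro h; exact one_ne_zero (congrFun h (Sum.inl ()))
    have hpos := hW.dotProduct_mulVec_pos hvne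
    have hle := hWle.dotProduct_mulVec_nonneg (fun _ => (1:ℝ))
    simp only [star_trivial] at hpos hle
    rw [Matrix.sub_mulVec, Matrix.smul_mulVec, Matrix.one_mulVec, dotProduct_sub,
      dotProduct_smul, smul_eq_mul] at hle
    have hvv : ((fun _ => (1:ℝ)) : QIdx n → ℝ) ⬝ᵥ (fun _ => (1:ℝ)) = (Fintype.card (QIdx n) : ℝ) := by
      simp [dotProduct]
    rw [hvv] at hle
    have hcard : (0:ℝ) < (Fintype.card (QIdx n) : ℝ) := by
      exact_mod_cast Fintype.card_pos_iff.mpr ⟨Sum.inl ()⟩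
    nlinarith [hpos, hle, hcard]
  have hkey : (cpi - cl) ⬝ᵥ (W *ᵥ (cpi - cl)) ≤ wmax * ((cpi - cl) ⬝ᵥ (cpi - cl)) := by
    have hle := hWle.dotProduct_mulVec_nonneg (cpi - cl)
    simp only [star_trivial] at hle
    rw [Matrix.sub_mulVec, Matrix.smul_mulVec, Matrix.one_mulVec, dotProduct_sub,
      dotProduct_smul, smul_eq_mul] at hle
    linarith
  have hrhs_nonneg : 0 ≤ (CT * κe + Cs * Lg) * Δ ^ 2 := le_trans (eNorm_nonneg' _) htot
  calc wNorm W (cpi - cl) = Real.sqrt ((cpi - cl) ⬝ᵥ (W *ᵥ (cpi - cl))) := rfl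
    _ ≤ Real.sqrt (wmax * ((cpi - cl) ⬝ᵥ (cpi - cl))) := Real.sqrt_le_sqrt hkey
    _ = Real.sqrt wmax * eNorm (cpi - cl) := by
        rw [Real.sqrt_mul hwmax, eNorm]
    _ ≤ Real.sqrt wmax * ((CT * κe + Cs * Lg) * Δ ^ 2) :=
        mul_le_mul_of_nonneg_left htot (Real.sqrt_nonneg _)
    _ = Real.sqrt wmax * (CT * κe + Cs * Lg) * Δ ^ 2 := by ring
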